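/- arXiv:2504.00965 — 6 statements merged into one kernel-verified Lean document; each statement's English description precedes it below -/
import Mathlib

section
/- Let α, β, γ, δ be natural numbers with α + β + γ < 2(δ − 1), let z ∈ ℂ, and suppose β ≤ α ≤ β + γ. Then ∫_ℂ w^α · conj(w)^β · (1 + z·conj(w))^γ / (1 + |w|²)^δ dA(w) = π · (γ choose (α − β)) · (α! · (δ − α − 2)!)/(δ − 1)! · z^(α−β). -/
open MeasureTheory Complex

section helpers
open Set Real Filter

lemma jcontOn (a d : ℕ) : ContinuousOn (fun t : ℝ => t ^ a / (1 + t) ^ d) (Ici 0) := by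
  apply ContinuousOn.div (by fun_prop) (by fun_prop)
  intro x hx
  have : (0:ℝ) < 1 + x := by simp at hx; linarith
  positivity

lemma jint (a d : ℕ) (h : a + 2 ≤ d) :
    IntegrableOn (fun t : ℝ => t ^ a / (1 + t) ^ d) (Ioi 0) := by
  have h1 : IntegrableOn (fun t : ℝ => t ^ a / (1 + t) ^ d) (Ioc 0 1) :=
    (((jcontOn a d).mono (fun x hx => hx.1)).integrableOn_compact isCompact_Icc).mono_set
      Ioc_subset_Icc_self
  have h2 : IntegrableOn (fun t : ℝ => t ^ a / (1 + t) ^ d) (Ioi 1) := by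
    have hint : IntegrableOn (fun t : ℝ => t ^ ((a : ℝ) - d)) (Ioi 1) :=
      integrableOn_Ioi_rpow_of_lt (by
        have : (a:ℝ) + 2 ≤ d := by exact_mod_cast h
        linarith) one_pos
    apply hint.mono' (((jcontOn a d).mono (fun x (hx : x ∈ Ioi (1:ℝ)) => mem_Ici.mpr (le_trans zero_le_one (le_of_lt (mem_Ioi.mp hx))))).aestronglyMeasurable measurableSet_Ioi)
    · filter_upwards [ae_restrict_mem measurableSet_Ioi] with x hx
      have hx1 : (1:ℝ) < x := hx
      have hx0 : (0:ℝ) < x := by linarith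
      rw [Real.norm_eq_abs, abs_div, _root_.abs_of_nonneg (by positivity), _root_.abs_of_nonneg (by positivity)]
      rw [show ((a:ℝ) - d) = (a:ℝ) + (-(d:ℝ)) by ring, rpow_add hx0, rpow_natCast,
        rpow_neg hx0.le, rpow_natCast]
      rw [div_eq_mul_inv]
      apply mul_le_mul le_rfl _ (by positivity) (by positivity)
      apply inv_anti₀ (by positivity)
      exact pow_le_pow_left₀ hx0.le (by linarith) d
  have := h1.union h2
  rwa [Ioc_union_Ioi_eq_Ioi zero_le_one] at this

lemma jval (a d : ℕ) (h : a + 2 ≤ d) :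
    ∫ t in Ioi (0:ℝ), t ^ a / (1 + t) ^ d
      = a.factorial * (d - a - 2).factorial / (d - 1).factorial := by
  induction a generalizing d with
  | zero =>
    obtain ⟨e, rfl⟩ : ∃ e, d = e + 2 := ⟨d - 2, by omega⟩
    have key : ∫ t in Ioi (0:ℝ), (fun x : ℝ => 1 / (1 + x) ^ (e+2)) t
        = 0 - (fun x : ℝ => -(1/((e:ℝ)+1)) * ((1+x)^(e+1))⁻¹) 0 := by
      apply integral_Ioi_of_hasDerivAt_of_tendsto' (f := fun x : ℝ => -(1/((e:ℝ)+1)) * ((1+x)^(e+1))⁻¹)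
      · intro x hx
        have hx0 : (0:ℝ) ≤ x := hx
        have h1x : (0:ℝ) < 1 + x := by linarith
        have hD : HasDerivAt (fun t : ℝ => (1+t)^(e+1)) (((e:ℝ)+1)*(1+x)^e * 1) x := by
          have := ((hasDerivAt_id x).const_add 1).pow (e+1)
          simp only [id, mul_one] at this ⊢
          exact this.congr_deriv (by simp)
        have := (hD.inv (by positivity)).const_mul (-(1/((e:ℝ)+1)))
        refine this.congr_deriv ?_
        field_simp
        ring
      · simpa using jint 0 (e+2) (by omega)
      · have h1 : Tendsto (fun x : ℝ => ((1+x)^(e+1))⁻¹) atTop (nhds 0) := by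
          apply tendsto_inv_atTop_zero.comp
          exact (tendsto_pow_atTop (by omega)).comp (tendsto_atTop_add_const_left _ _ tendsto_id)
        have := h1.const_mul (-(1/((e:ℝ)+1)))
        simpa using this
    simp only [pow_zero, one_mul] at key ⊢
    rw [show (fun t : ℝ => 1 / (1+t)^(e+2)) = fun t : ℝ => (1:ℝ)/(1+t)^(e+2) from rfl] at key
    simp only [one_div] at key ⊢
    rw [key]
    simp [Nat.factorial_succ]
    field_simp
  | succ a ih =>
    obtain ⟨e, rfl⟩ : ∃ e, d = a + 3 + e := ⟨d - (a+3), by omega⟩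
    set D : ℝ := (a:ℝ) + e + 2 with hDdef
    have hD0 : D ≠ 0 := by positivity
    have key : ∫ t in Ioi (0:ℝ),
        (fun x : ℝ => x^(a+1)/(1+x)^(a+3+e) - ((a:ℝ)+1)/D * (x^a/(1+x)^(a+2+e))) t
        = 0 - (fun x : ℝ => -(1/D) * (x^(a+1) * ((1+x)^(a+2+e))⁻¹)) 0 := by
      apply integral_Ioi_of_hasDerivAt_of_tendsto'
        (f := fun x : ℝ => -(1/D) * (x^(a+1) * ((1+x)^(a+2+e))⁻¹))
      · intro x hx
        have hx0 : (0:ℝ) ≤ x := hx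
        have h1x : (0:ℝ) < 1 + x := by linarith
        have hP : HasDerivAt (fun t : ℝ => t^(a+1)) (((a:ℝ)+1)*x^a) x := by
          have := (hasDerivAt_id x).pow (a+1)
          simp only [id] at this ⊢
          exact this.congr_deriv (by simp)
        have hQ : HasDerivAt (fun t : ℝ => (1+t)^(a+2+e)) (((a:ℝ)+2+e)*(1+x)^(a+1+e) * 1) x := by
          have := ((hasDerivAt_id x).const_add 1).pow (a+2+e)
          have h2 : a + 2 + e - 1 = a + 1 + e := by omega
          simp only [h2, id, mul_one] at this ⊢
          exact this.congr_deriv (by simp)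
        have := (hP.mul (hQ.inv (by positivity))).const_mul (-(1/D))
        refine this.congr_deriv ?_
        have hne : ((1:ℝ)+x)^(a+2+e) ≠ 0 := by positivity
        simp only [Pi.inv_apply]
        field_simp
        ring_nf
        rw [hDdef]
        ring
      · apply Integrable.sub (jint (a+1) (a+3+e) (by omega))
        exact ((jint a (a+2+e) (by omega)).const_mul _)
      · have hg : Tendsto (fun x : ℝ => x^(a+1) * ((1+x)^(a+2+e))⁻¹) atTop (nhds 0) := by
          apply squeeze_zero' (g := fun x : ℝ => (1+x)⁻¹)
          · filter_upwards [eventually_ge_atTop (0:ℝ)] with x hx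
            positivity
          · filter_upwards [eventually_ge_atTop (0:ℝ)] with x hx
            have h1x : (0:ℝ) < 1 + x := by linarith
            calc x^(a+1) * ((1+x)^(a+2+e))⁻¹
                ≤ (1+x)^(a+1) * ((1+x)^(a+2+e))⁻¹ := by
                  gcongr; linarith
              _ = ((1+x)^(e+1))⁻¹ := by
                  rw [show a+2+e = (a+1)+(e+1) by omega, pow_add]
                  field_simp
                  ring
              _ ≤ (1+x)⁻¹ := by
                  apply inv_anti₀ h1x
                  exact le_self_pow₀ (by linarith) (by omega)
          · exact tendsto_inv_atTop_zero.comp (tendsto_atTop_add_const_left _ _ tendsto_id)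
        simpa using hg.const_mul (-(1/D))
    have hi1 := jint (a+1) (a+3+e) (by omega)
    have hi2 := jint a (a+2+e) (by omega)
    rw [integral_sub hi1 (hi2.const_mul _), MeasureTheory.integral_const_mul] at key
    simp only [zero_pow (Nat.succ_ne_zero a), zero_mul, mul_zero, sub_zero, zero_sub, neg_zero,
      one_pow, inv_one, mul_one] at key
    have hsub : ∫ t in Ioi (0:ℝ), t ^ (a+1) / (1 + t) ^ (a+3+e)
        = ((a:ℝ)+1)/D * ∫ t in Ioi (0:ℝ), t ^ a / (1 + t) ^ (a+2+e) := by linarith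
    rw [hsub, ih (a+2+e) (by omega)]
    rw [show a+2+e-a-2 = e by omega, show a+2+e-1 = a+1+e by omega,
      show a+3+e-(a+1)-2 = e by omega, show a+3+e-1 = a+2+e by omega]
    rw [show a+2+e = (a+1+e)+1 by omega, Nat.factorial_succ (a+1+e), Nat.factorial_succ a]
    have hne1 : ((a+1+e).factorial : ℝ) ≠ 0 := by positivity
    push_cast
    field_simp
    ring

lemma ccont (a b δ : ℕ) : Continuous (fun w : ℂ => w ^ a * (starRingEnd ℂ w) ^ b /
      ((1 + ‖w‖ ^ 2 : ℝ) : ℂ) ^ δ) := by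
  apply Continuous.div
  · exact (continuous_pow a).mul ((Complex.continuous_conj).pow b)
  · exact (Complex.continuous_ofReal.comp (continuous_const.add
      ((continuous_norm).pow 2))).pow δ
  · intro w
    have h1 : (0:ℝ) < 1 + ‖w‖ ^ 2 := by positivity
    simp only [ne_eq, pow_eq_zero_iff', Complex.ofReal_eq_zero]
    intro hc
    exact absurd hc.1 (by positivity)

lemma cint (a b δ : ℕ) (h : a + b + 2 < 2*δ) :
    Integrable (fun w : ℂ => w ^ a * (starRingEnd ℂ w) ^ b /
      ((1 + ‖w‖ ^ 2 : ℝ) : ℂ) ^ δ) := by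
  set m : ℕ := 2*δ - (a+b) with hm
  have habm : a + b + m = 2*δ := by omega
  apply Integrable.mono' ((integrable_one_add_norm (E := ℂ)
    (r := (m:ℝ)) (by simp only [Complex.finrank_real_complex]; exact_mod_cast (by omega : (2:ℕ) < m))).const_mul ((2:ℝ)^δ))
    (ccont a b δ).aestronglyMeasurable
  filter_upwards with w
  have h0 : (0:ℝ) ≤ ‖w‖ := norm_nonneg w
  have h1 : (0:ℝ) < 1 + ‖w‖ ^ 2 := by positivity
  rw [norm_div, norm_mul, norm_pow, norm_pow, norm_pow]
  rw [Complex.norm_conj, Complex.norm_real, Real.norm_of_nonneg h1.le]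
  rw [Real.rpow_neg (by positivity), Real.rpow_natCast]
  set t : ℝ := ‖w‖
  rw [← pow_add]
  have key : t^(a+b) * (1+t)^m ≤ 2^δ * (1+t^2)^δ := by
    calc t^(a+b) * (1+t)^m ≤ (1+t)^(a+b) * (1+t)^m :=
        mul_le_mul_of_nonneg_right (pow_le_pow_left₀ h0 (by linarith) _) (by positivity)
      _ = ((1+t)^2)^δ := by rw [← pow_add, ← pow_mul]; congr 1; try omega
      _ ≤ (2*(1+t^2))^δ := pow_le_pow_left₀ (by positivity) (by nlinarith [sq_nonneg (1-t)]) δ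
      _ = 2^δ * (1+t^2)^δ := mul_pow _ _ _
  rw [← div_eq_mul_inv, div_le_div_iff₀ (by positivity) (by positivity)]
  linarith [key]

lemma ang_ne (a b : ℕ) (hab : a ≠ b) :
    ∫ θ in Ioo (-π) π, Complex.exp (((a:ℂ) - b) * θ * Complex.I) = 0 := by
  set n : ℤ := (a:ℤ) - b with hn
  have hnne : (n:ℂ) ≠ 0 := by
    simp only [ne_eq, Int.cast_eq_zero, hn]
    omega
  set c : ℂ := ((a:ℂ) - b) * Complex.I with hc
  have hcn : c = (n:ℂ) * Complex.I := by push_cast [hc, hn]; ring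
  have hc0 : c ≠ 0 := by
    rw [hcn]
    exact mul_ne_zero hnne Complex.I_ne_zero
  have heq : ∀ θ : ℝ, ((a:ℂ) - b) * θ * Complex.I = c * θ := by intro θ; rw [hc]; ring
  simp_rw [heq]
  rw [← integral_Ioc_eq_integral_Ioo, ← intervalIntegral.integral_of_le (by linarith [pi_pos] : -π ≤ π)]
  rw [integral_exp_mul_complex hc0]
  have : Complex.exp (c * π) = Complex.exp (c * (-π)) := by
    have harg : c * π = c * (-π) + (n:ℂ) * (2 * π * Complex.I) := by
      rw [hcn]; push_cast; ring
    rw [harg, Complex.exp_add, Complex.exp_int_mul_two_pi_mul_I, mul_one]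
  rw [Complex.ofReal_neg, this, sub_self, zero_div]

lemma ang_eq : ∫ _ in Ioo (-π) π, (1:ℂ) = 2 * π := by
  simp only [integral_const, smul_eq_mul, mul_one]
  rw [measureReal_def, Measure.restrict_apply MeasurableSet.univ, Set.univ_inter, Real.volume_Ioo, ENNReal.toReal_ofReal (by linarith [pi_pos])]
  simp [Complex.real_smul]
  push_cast
  ring

lemma polar_split (a b δ : ℕ) :
    ∫ w : ℂ, w ^ a * (starRingEnd ℂ w) ^ b / ((1 + ‖w‖ ^ 2 : ℝ) : ℂ) ^ δ
      = (∫ r in Ioi (0:ℝ), ((r * (r^(a+b) / (1+r^2)^δ) : ℝ) : ℂ)) *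
        ∫ θ in Ioo (-π) π, Complex.exp (((a:ℂ) - b) * θ * Complex.I) := by
  rw [← Complex.integral_comp_polarCoord_symm, polarCoord_target]
  rw [← setIntegral_prod_mul (fun r : ℝ => ((r * (r^(a+b) / (1+r^2)^δ) : ℝ) : ℂ))
    (fun θ : ℝ => Complex.exp (((a:ℂ) - b) * θ * Complex.I)), Measure.volume_eq_prod]
  apply setIntegral_congr_fun ((measurableSet_Ioi).prod measurableSet_Ioo)
  rintro ⟨r, θ⟩ ⟨hr, hθ⟩
  have hr0 : (0:ℝ) < r := hr
  simp only [Complex.polarCoord_symm_apply, smul_eq_mul]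
  have hw : (r:ℂ) * (Real.cos θ + Real.sin θ * Complex.I) = r * Complex.exp (θ * Complex.I) := by
    rw [Complex.exp_mul_I]
    push_cast
    ring
  rw [hw]
  have habs : ‖((r:ℂ) * Complex.exp (θ * Complex.I))‖ = r := by
    rw [norm_mul, Complex.norm_real, Complex.norm_exp_ofReal_mul_I, mul_one, Real.norm_of_nonneg hr0.le]
  rw [habs]
  have hconj : (starRingEnd ℂ) ((r:ℂ) * Complex.exp (θ * Complex.I))
      = r * Complex.exp (-(θ * Complex.I)) := by
    rw [map_mul, Complex.conj_ofReal, ← Complex.exp_conj]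
    congr 2
    simp [Complex.conj_I]
  rw [hconj, mul_pow, mul_pow, ← Complex.exp_nat_mul, ← Complex.exp_nat_mul, Complex.ofReal_mul]
  push_cast
  have hE : Complex.exp ((a:ℂ)*((θ:ℂ)*Complex.I)) * Complex.exp (-((b:ℂ)*((θ:ℂ)*Complex.I)))
      = Complex.exp (((a:ℂ)-b)*θ*Complex.I) := by
    rw [← Complex.exp_add]; congr 1; ring
  rw [pow_add, ← hE, Complex.real_smul]
  ring
lemma radial (a δ : ℕ) (h : a + 2 ≤ δ) :
    ∫ r in Ioi (0:ℝ), r * (r^(a+a) / (1+r^2)^δ)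
      = ((a.factorial : ℝ) * ((δ - a - 2).factorial : ℝ) / ((δ-1).factorial : ℝ)) / 2 := by
  have key := integral_comp_rpow_Ioi (fun t : ℝ => t^a/(1+t)^δ) (p := (2:ℝ)) two_ne_zero
  rw [jval a δ h] at key
  have congrstep : ∫ x in Ioi (0:ℝ),
      (|(2:ℝ)| * x ^ ((2:ℝ)-1)) • ((fun t : ℝ => t^a/(1+t)^δ) (x^(2:ℝ)))
      = ∫ x in Ioi (0:ℝ), 2 * (x * (x^(a+a)/(1+x^2)^δ)) := by
    apply setIntegral_congr_fun measurableSet_Ioi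
    intro x hx
    have hx0 : (0:ℝ) < x := hx
    have h2 : x ^ (2:ℝ) = x^(2:ℕ) := by
      rw [← Real.rpow_natCast x 2]; norm_num
    simp only [smul_eq_mul]
    rw [h2, show (2:ℝ)-1 = 1 by norm_num, Real.rpow_one, _root_.abs_of_pos (by norm_num : (0:ℝ) < 2)]
    rw [show x^(2:ℕ) = x^2 from rfl, ← pow_mul]
    rw [show 2*a = a+a by omega]
    ring
  rw [congrstep, MeasureTheory.integral_const_mul] at key
  linarith [key]

lemma Iab0 (a b δ : ℕ) (hab : a ≠ b) :
    ∫ w : ℂ, w ^ a * (starRingEnd ℂ w) ^ b / ((1 + ‖w‖ ^ 2 : ℝ) : ℂ) ^ δ = 0 := by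
  rw [polar_split, ang_ne a b hab, mul_zero]

lemma Iaa (a δ : ℕ) (h : a + 2 ≤ δ) :
    ∫ w : ℂ, w ^ a * (starRingEnd ℂ w) ^ a / ((1 + ‖w‖ ^ 2 : ℝ) : ℂ) ^ δ
      = (Real.pi : ℂ) * ((a.factorial : ℂ) * ((δ - a - 2).factorial : ℂ) /
          ((δ - 1).factorial : ℂ)) := by
  rw [polar_split]
  have hang : ∫ θ in Ioo (-π) π, Complex.exp (((a:ℂ) - a) * θ * Complex.I) = 2 * π := by
    simp only [sub_self, zero_mul, Complex.exp_zero]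
    exact ang_eq
  have hoc : (∫ r in Ioi (0:ℝ), ((r * (r^(a+a)/(1+r^2)^δ) : ℝ) : ℂ))
      = (((∫ r in Ioi (0:ℝ), r * (r^(a+a)/(1+r^2)^δ)) : ℝ) : ℂ) := integral_ofReal
  rw [hang, hoc, radial a δ h]
  push_cast
  ring

end helpers

/-- Nonvanishing case of the key integral computation (Lemma 8.1 of the paper):
for natural numbers `α β γ δ` with `α + β + γ < 2(δ - 1)` and `β ≤ α ≤ β + γ`,
`∫_ℂ w^α conj(w)^β (1 + z conj(w))^γ / (1 + |w|²)^δ dA(w)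
  = π ⬝ C(γ, α-β) ⬝ α! (δ-α-2)! / (δ-1)! ⬝ z^(α-β)`. -/
theorem stmt_0 (α β γ δ : ℕ) (hδ : α + β + γ < 2 * (δ - 1)) (z : ℂ)
    (hβα : β ≤ α) (hαβγ : α ≤ β + γ) :
    ∫ w : ℂ, w ^ α * (starRingEnd ℂ w) ^ β * (1 + z * starRingEnd ℂ w) ^ γ /
        ((1 + ‖w‖ ^ 2 : ℝ) : ℂ) ^ δ =
      (Real.pi : ℂ) * (γ.choose (α - β) : ℂ) *
        ((α.factorial : ℂ) * ((δ - α - 2).factorial : ℂ) / ((δ - 1).factorial : ℂ)) *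
        z ^ (α - β) := by
  have hδ2 : 2 ≤ δ := by omega
  have hexp : ∀ w : ℂ, w ^ α * (starRingEnd ℂ w) ^ β * (1 + z * starRingEnd ℂ w) ^ γ /
        ((1 + ‖w‖ ^ 2 : ℝ) : ℂ) ^ δ
      = ∑ k ∈ Finset.range (γ+1), ((γ.choose k : ℂ) * z ^ k) *
          (w ^ α * (starRingEnd ℂ w) ^ (β+k) / ((1 + ‖w‖ ^ 2 : ℝ) : ℂ) ^ δ) := by
    intro w
    rw [add_comm (1:ℂ) _, add_pow, Finset.mul_sum, Finset.sum_div]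
    apply Finset.sum_congr rfl
    intro k hk
    rw [mul_pow, one_pow, pow_add]
    ring
  simp_rw [hexp]
  rw [integral_finset_sum _ (fun k hk => by
    refine ((cint α (β+k) δ ?_).const_mul _)
    rw [Finset.mem_range] at hk
    omega)]
  simp_rw [MeasureTheory.integral_const_mul]
  rw [Finset.sum_eq_single (α - β)]
  · rw [show β + (α - β) = α by omega, Iaa α δ (by omega)]
    ring
  · intro k hk hkne
    rw [Iab0 α (β+k) δ (by omega), mul_zero]
  · intro hmem
    exact absurd (Finset.mem_range.mpr (by omega)) hmem
end

section
/- Let α, β, γ, δ be natural numbers with α + β + γ < 2(δ − 1), and let z ∈ ℂ. If α < β or α > β + γ, then ∫_ℂ w^α · conj(w)^β · (1 + z·conj(w))^γ / (1 + |w|²)^δ dA(w) = 0. -/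
open MeasureTheory Complex

private lemma core_integrable (n m δ : ℕ) (hδ : n + m + 2 < 2 * δ) :
    Integrable (fun w : ℂ =>
      w ^ n * (starRingEnd ℂ w) ^ m / ((1 + ‖w‖ ^ 2 : ℝ) : ℂ) ^ δ) := by
  have hfin : (Module.finrank ℝ ℂ : ℝ) < (2 * δ - (n + m) : ℝ) := by
    rw [Complex.finrank_real_complex]
    have : ((n + m : ℕ) : ℝ) + 2 < (2 * δ : ℕ) := by exact_mod_cast hδ
    push_cast at this ⊢
    linarith
  refine ((integrable_rpow_neg_one_add_norm_sq (μ := volume) hfin)).mono'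
    ?_ (Filter.Eventually.of_forall fun w => ?_)
  · refine Continuous.aestronglyMeasurable ?_
    apply Continuous.div
    · exact (continuous_pow n).mul (Complex.continuous_conj.pow m)
    · exact (Complex.continuous_ofReal.comp
        (continuous_const.add (continuous_norm.pow 2))).pow δ
    · intro w
      exact pow_ne_zero _ (Complex.ofReal_ne_zero.mpr (ne_of_gt (by positivity)))
  · have h1 : (0:ℝ) < 1 + ‖w‖ ^ 2 := by positivity
    rw [norm_div, norm_mul, norm_pow, norm_pow, norm_pow]
    rw [RingHomIsometric.norm_map]
    rw [Complex.norm_real]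
    rw [Real.norm_of_nonneg (by positivity)]
    rw [← pow_add]
    have key : ‖w‖ ^ (n + m) ≤ (1 + ‖w‖ ^ 2) ^ (((n + m : ℕ) : ℝ) / 2) := by
      have h2 : (‖w‖ ^ (n + m) : ℝ) = (‖w‖ ^ 2) ^ (((n + m : ℕ) : ℝ) / 2) := by
        rw [← Real.rpow_natCast ‖w‖ 2, ← Real.rpow_mul (norm_nonneg w),
          ← Real.rpow_natCast ‖w‖ (n + m)]
        congr 1
        push_cast
        ring
      rw [h2]
      exact Real.rpow_le_rpow (by positivity) (by linarith) (by positivity)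
    calc ‖w‖ ^ (n + m) / (1 + ‖w‖ ^ 2) ^ δ
        ≤ (1 + ‖w‖ ^ 2) ^ (((n + m : ℕ) : ℝ) / 2) / (1 + ‖w‖ ^ 2) ^ δ := by
          gcongr
      _ = (1 + ‖w‖ ^ 2) ^ (-(2 * (δ:ℝ) - ((n:ℝ) + (m:ℝ))) / 2) := by
          rw [← Real.rpow_natCast (1 + ‖w‖ ^ 2) δ, ← Real.rpow_sub h1]
          congr 1
          push_cast
          ring

private lemma core_vanish (n m δ : ℕ) (hnm : n ≠ m) :
    ∫ w : ℂ, w ^ n * (starRingEnd ℂ w) ^ m / ((1 + ‖w‖ ^ 2 : ℝ) : ℂ) ^ δ = 0 := by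
  set f : ℂ → ℂ := fun w =>
    w ^ n * (starRingEnd ℂ w) ^ m / ((1 + ‖w‖ ^ 2 : ℝ) : ℂ) ^ δ with hf
  have hd : ((n : ℝ) - m) ≠ 0 := by
    intro hc
    apply hnm
    have : (n : ℝ) = m := by linarith
    exact_mod_cast this
  set θ : ℝ := Real.pi / ((n : ℝ) - m) with hθ
  set u : Circle := Circle.exp θ with hu
  have hrot : ∫ w : ℂ, f w = ∫ w : ℂ, f (rotation u w) := by
    exact ((rotation u).measurePreserving.integral_comp
      (rotation u).toHomeomorph.measurableEmbedding f).symm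
  have hcoe : (u : ℂ) = Complex.exp (θ * Complex.I) := Circle.coe_exp θ
  have habs : ∀ w : ℂ, ‖(u : ℂ) * w‖ = ‖w‖ := by
    intro w
    rw [norm_mul, Circle.norm_coe, one_mul]
  have hconj : (starRingEnd ℂ) (u : ℂ) = Complex.exp (-(θ * Complex.I)) := by
    rw [hcoe, ← Complex.exp_conj]
    congr 1
    simp only [map_mul, Complex.conj_ofReal, Complex.conj_I, mul_neg]
  have hfac : (u : ℂ) ^ n * (starRingEnd ℂ (u : ℂ)) ^ m = -1 := by
    rw [hconj, hcoe, ← Complex.exp_nat_mul, ← Complex.exp_nat_mul, ← Complex.exp_add]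
    have e1 : (n : ℂ) * (θ * Complex.I) + m * -(θ * Complex.I)
        = (((n : ℝ) - m) * θ : ℝ) * Complex.I := by
      push_cast
      ring
    rw [e1]
    have e2 : ((n : ℝ) - m) * θ = Real.pi := by
      rw [hθ]
      field_simp
    rw [e2]
    exact Complex.exp_pi_mul_I
  have hkey : ∀ w : ℂ, f ((u : ℂ) * w) = -f w := by
    intro w
    simp only [hf]
    rw [mul_pow, map_mul, mul_pow, habs]
    calc (u:ℂ) ^ n * w ^ n * ((starRingEnd ℂ (u:ℂ)) ^ m * (starRingEnd ℂ w) ^ m) /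
          ((1 + ‖w‖ ^ 2 : ℝ) : ℂ) ^ δ
        = ((u:ℂ) ^ n * (starRingEnd ℂ (u:ℂ)) ^ m) *
            (w ^ n * (starRingEnd ℂ w) ^ m / ((1 + ‖w‖ ^ 2 : ℝ) : ℂ) ^ δ) := by
          ring
      _ = -(w ^ n * (starRingEnd ℂ w) ^ m / ((1 + ‖w‖ ^ 2 : ℝ) : ℂ) ^ δ) := by
          rw [hfac]; ring
  have hI : ∫ w : ℂ, f w = -∫ w : ℂ, f w := by
    conv_lhs => rw [hrot]
    rw [← integral_neg]
    refine integral_congr_ae (Filter.Eventually.of_forall fun w => ?_)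
    simp only [rotation_apply]
    exact hkey w
  have h2 : (2 : ℂ) * ∫ w : ℂ, f w = 0 := by linear_combination hI
  exact (mul_eq_zero.mp h2).resolve_left two_ne_zero

/-- Vanishing case of the key integral computation (Lemma 8.1 of the paper):
for natural numbers `α β γ δ` with `α + β + γ < 2(δ - 1)`, if `α < β` or `α > β + γ`, then
`∫_ℂ w^α conj(w)^β (1 + z conj(w))^γ / (1 + |w|²)^δ dA(w) = 0`. -/
theorem stmt_1 (α β γ δ : ℕ) (hδ : α + β + γ < 2 * (δ - 1)) (z : ℂ)
    (h : α < β ∨ β + γ < α) :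
    ∫ w : ℂ, w ^ α * (starRingEnd ℂ w) ^ β * (1 + z * starRingEnd ℂ w) ^ γ /
        ((1 + ‖w‖ ^ 2 : ℝ) : ℂ) ^ δ = 0 := by
  have hδ' : α + β + γ + 2 < 2 * δ := by omega
  have hexpand : ∀ w : ℂ,
      w ^ α * (starRingEnd ℂ w) ^ β * (1 + z * starRingEnd ℂ w) ^ γ /
          ((1 + ‖w‖ ^ 2 : ℝ) : ℂ) ^ δ
        = ∑ k ∈ Finset.range (γ + 1), (γ.choose k : ℂ) * z ^ k *
            (w ^ α * (starRingEnd ℂ w) ^ (β + k) /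
              ((1 + ‖w‖ ^ 2 : ℝ) : ℂ) ^ δ) := by
    intro w
    rw [add_comm (1:ℂ) (z * starRingEnd ℂ w), add_pow]
    rw [Finset.mul_sum, Finset.sum_div]
    refine Finset.sum_congr rfl fun k _ => ?_
    rw [mul_pow, pow_add]
    ring
  rw [integral_congr_ae (Filter.Eventually.of_forall hexpand)]
  rw [integral_finset_sum _ (fun k hk => by
    refine ((core_integrable α (β + k) δ ?_).const_mul _)
    have : k ≤ γ := Nat.lt_succ_iff.mp (Finset.mem_range.mp hk)
    omega)]
  refine Finset.sum_eq_zero fun k hk => ?_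
  have hk' : k ≤ γ := Nat.lt_succ_iff.mp (Finset.mem_range.mp hk)
  rw [integral_const_mul, core_vanish α (β + k) δ (by omega), mul_zero]
end

section
/- Let k be a natural number, let P be a polynomial with complex coefficients of degree at most k, and let z ∈ ℂ. Then the function w ↦ (1 + z·conj(w))^k / (1 + |w|²)^(k+2) · P(w) is Lebesgue-integrable on ℂ and ((k+1)/π) · ∫_ℂ (1 + z·conj(w))^k / (1 + |w|²)^(k+2) · P(w) dA(w) = P(z). -/
open MeasureTheory Complex Polynomial
open Set Filter
open scoped Real Topology



private lemma aux_radial_integrable (k n : ℕ) (h : n ≤ k) :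
    IntegrableOn (fun r : ℝ => r ^ (2*n+1) / (1 + r^2) ^ (k+2)) (Set.Ioi 0) := by
  refine (integrable_inv_one_add_sq.integrableOn).mono' ?_ ?_
  · refine (Continuous.div (by continuity) (by continuity) ?_).aestronglyMeasurable
    intro r; positivity
  · filter_upwards [ae_restrict_mem measurableSet_Ioi] with r (hr : 0 < r)
    have h1 : (0:ℝ) < 1 + r^2 := by positivity
    rw [Real.norm_eq_abs, _root_.abs_of_nonneg (by positivity), div_le_iff₀ (by positivity)]
    have key : r^(2*n+1) ≤ (1+r^2)^(k+1) := by
      calc r^(2*n+1) = (r^2)^n * r := by ring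
        _ ≤ (1+r^2)^n * (1+r^2) := by
            exact mul_le_mul (pow_le_pow_left₀ (sq_nonneg r) (by nlinarith) n)
              (by nlinarith) hr.le (by positivity)
        _ = (1+r^2)^(n+1) := (pow_succ _ n).symm
        _ ≤ (1+r^2)^(k+1) := pow_le_pow_right₀ (by nlinarith) (by omega)
    calc r^(2*n+1) ≤ (1+r^2)^(k+1) := key
      _ = (1+r^2)⁻¹ * (1+r^2)^(k+2) := by field_simp; ring

private lemma aux_one_add_sq_pow_atTop (m : ℕ) :
    Tendsto (fun r : ℝ => ((1 + r^2) ^ (m+1))⁻¹) atTop (𝓝 0) := by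
  apply Tendsto.inv_tendsto_atTop
  refine (tendsto_pow_atTop (by omega : m+1 ≠ 0)).comp ?_
  exact tendsto_atTop_add_const_left _ 1 (tendsto_pow_atTop (by norm_num))

private lemma aux_radial_base (k : ℕ) :
    ∫ r in Set.Ioi (0:ℝ), r ^ (2*0+1) / (1 + r^2) ^ (k+2) = 1 / (2*((k:ℝ)+1)) := by
  have hderiv : ∀ r ∈ Set.Ici (0:ℝ), HasDerivAt
      (fun r : ℝ => -(2*((k:ℝ)+1))⁻¹ * ((1 + r^2)^(k+1))⁻¹)
      (r ^ (2*0+1) / (1 + r^2) ^ (k+2)) r := by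
    intro r _
    have h1 : (0:ℝ) < 1 + r^2 := by positivity
    have hd : HasDerivAt (fun r : ℝ => 1 + r^2) (2*r) r := by
      simpa using ((hasDerivAt_pow 2 r).const_add 1)
    have hd2 := ((hd.fun_pow (k+1)).fun_inv (pow_ne_zero _ h1.ne')).const_mul (-(2*((k:ℝ)+1))⁻¹)
    refine hd2.congr_deriv ?_
    simp only [Nat.add_sub_cancel]
    push_cast
    field_simp
    ring
  have htend : Tendsto (fun r : ℝ => -(2*((k:ℝ)+1))⁻¹ * ((1 + r^2)^(k+1))⁻¹) atTop (𝓝 0) := by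
    have := (aux_one_add_sq_pow_atTop k).const_mul (-(2*((k:ℝ)+1))⁻¹)
    simpa using this
  have := integral_Ioi_of_hasDerivAt_of_tendsto' hderiv
    (aux_radial_integrable k 0 (Nat.zero_le k)) htend
  rw [this]
  norm_num

private lemma aux_radial_value : ∀ (n k : ℕ), n ≤ k →
    ∫ r in Set.Ioi (0:ℝ), r ^ (2*n+1) / (1 + r^2) ^ (k+2)
      = (n.factorial : ℝ) * (k-n).factorial / (2 * (k+1).factorial) := by
  intro n
  induction n with
  | zero =>
    intro k _
    rw [aux_radial_base k]
    rw [show (k+1).factorial = (k+1) * k.factorial from rfl]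
    have h1 : (0:ℝ) < k.factorial := by exact_mod_cast k.factorial_pos
    field_simp
    ring
    simp
  | succ n ih =>
    intro k hk
    obtain ⟨m, rfl⟩ : ∃ m, k = n+1+m := ⟨k-(n+1), by omega⟩
    set k := n+1+m with hkdef
    -- FTC applied to F r = r^(2n+2) / (1+r^2)^(k+1)
    have hderiv : ∀ r ∈ Set.Ici (0:ℝ), HasDerivAt
        (fun r : ℝ => r^(2*n+2) * ((1 + r^2)^(k+1))⁻¹)
        ((2*(n:ℝ)+2) * (r ^ (2*n+1) / (1 + r^2) ^ (k+2))
          - (2*(k:ℝ)-2*n) * (r ^ (2*(n+1)+1) / (1 + r^2) ^ (k+2))) r := by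
      intro r _
      have h1 : (0:ℝ) < 1 + r^2 := by positivity
      have hd : HasDerivAt (fun r : ℝ => 1 + r^2) (2*r) r := by
        simpa using ((hasDerivAt_pow 2 r).const_add 1)
      have hd2 := (hasDerivAt_pow (2*n+2) r).fun_mul ((hd.fun_pow (k+1)).fun_inv (pow_ne_zero _ h1.ne'))
      refine hd2.congr_deriv ?_
      have h2 : ((1:ℝ) + r^2) ^ (k+1) ≠ 0 := by positivity
      field_simp
      push_cast [hkdef]
      ring
    have htend : Tendsto (fun r : ℝ => r^(2*n+2) * ((1 + r^2)^(k+1))⁻¹) atTop (𝓝 0) := by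
      apply squeeze_zero
        (fun r => by rw [show 2*n+2 = (n+1)*2 by ring, pow_mul]; positivity)
        (g := fun r : ℝ => ((1 + r^2)^(m+1))⁻¹) ?_ (aux_one_add_sq_pow_atTop m)
      intro r
      have h1 : (0:ℝ) < 1 + r^2 := by positivity
      rw [← div_eq_mul_inv, div_le_iff₀ (by positivity)]
      have : ((1 + r^2)^(m+1))⁻¹ * (1+r^2)^(k+1) = (1+r^2)^(n+1) := by
        rw [show k+1 = (m+1)+(n+1) by omega, pow_add]
        field_simp
        ring
      rw [this]
      calc r^(2*n+2) = (r^2)^(n+1) := by ring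
        _ ≤ (1+r^2)^(n+1) := pow_le_pow_left₀ (sq_nonneg r) (by nlinarith) _
    have hint1 := aux_radial_integrable k n (by omega)
    have hint2 := aux_radial_integrable k (n+1) (by omega)
    have hFTC := integral_Ioi_of_hasDerivAt_of_tendsto' hderiv
      ((hint1.const_mul _).sub (hint2.const_mul _)) htend
    rw [integral_sub (hint1.const_mul _) (hint2.const_mul _),
      integral_const_mul, integral_const_mul, ih k (by omega)] at hFTC
    norm_num at hFTC
    -- hFTC : (2n+2) * I_n - (2k-2n) * I_{n+1} = 0 - 0
    have hsolve : (2*(k:ℝ)-2*n) * ∫ r in Set.Ioi (0:ℝ), r ^ (2*(n+1)+1) / (1 + r^2) ^ (k+2)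
        = (2*(n:ℝ)+2) * ((n.factorial : ℝ) * (k-n).factorial / (2 * (k+1).factorial)) := by
      have h0 : (0:ℝ)^(2*n+2) * ((1 + (0:ℝ)^2)^(k+1))⁻¹ = 0 := by norm_num
      linarith [hFTC]
    have hkn : k - n = m + 1 := by omega
    have hkn1 : k - (n+1) = m := by omega
    rw [hkn] at hsolve
    rw [hkn1]
    have h2 : (2*(k:ℝ)-2*n) = 2*(m+1) := by push_cast [hkdef]; ring
    rw [h2] at hsolve
    have hm1 : (0:ℝ) < m+1 := by positivity
    have hne : (2:ℝ)*((m:ℝ)+1) ≠ 0 := by positivity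
    apply mul_left_cancel₀ hne
    rw [hsolve]
    have hfne : ((k+1).factorial : ℝ) ≠ 0 := by exact_mod_cast (k+1).factorial_ne_zero
    push_cast [Nat.factorial_succ]
    field_simp


private lemma aux_angular (c : ℤ) :
    ∫ θ in Set.Ioo (-π) π, Complex.exp (c * θ * Complex.I)
      = if c = 0 then ((2*π : ℝ) : ℂ) else 0 := by
  rcases eq_or_ne c 0 with rfl | hc
  · simp only [Int.cast_zero, zero_mul, Complex.exp_zero, if_pos rfl]
    rw [setIntegral_const, Real.volume_real_Ioo_of_le (by linarith [Real.pi_pos])]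
    push_cast
    ring_nf
    simp [two_mul]
  · rw [if_neg hc, ← integral_Ioc_eq_integral_Ioo,
      ← intervalIntegral.integral_of_le (by linarith [Real.pi_pos] : -π ≤ π)]
    have hrw : ∀ θ : ℝ, (c:ℂ) * θ * Complex.I = ((c:ℂ) * Complex.I) * θ := fun θ => by ring
    simp_rw [hrw]
    rw [integral_exp_mul_complex (by simp [hc, Complex.I_ne_zero])]
    have h1 : (c:ℂ) * Complex.I * ↑π = ↑c * (↑π * Complex.I) := by ring
    have h2 : (c:ℂ) * Complex.I * ↑(-π) = ↑c * (-(↑π * Complex.I)) := by push_cast; ring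
    rw [h1, h2, Complex.exp_int_mul, Complex.exp_int_mul, Complex.exp_neg, Complex.exp_pi_mul_I]
    norm_num


private lemma H_integrable (k i j : ℕ) (hi : i ≤ k) (hj : j ≤ k) :
    Integrable (fun w : ℂ =>
      (starRingEnd ℂ w)^j * w^i / ((1 + ‖w‖^2 : ℝ):ℂ)^(k+2)) := by
  have hfin : ((Module.finrank ℝ ℂ : ℝ)) < 4 := by
    rw [Complex.finrank_real_complex]; norm_num
  refine ((integrable_rpow_neg_one_add_norm_sq (μ := volume) hfin).const_mul
    ((2:ℝ)^k)).mono' ?_ (Filter.Eventually.of_forall fun w => ?_)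
  · refine (Continuous.div (by continuity) (by continuity) fun w => ?_).aestronglyMeasurable
    exact pow_ne_zero _ (by rw [Complex.ofReal_ne_zero]; positivity)
  · set r : ℝ := ‖w‖ with hr
    have hr0 : 0 ≤ r := norm_nonneg w
    have h1 : (0:ℝ) < 1 + r^2 := by positivity
    have hnorm : ‖(starRingEnd ℂ w)^j * w^i / ((1 + ‖w‖^2 : ℝ):ℂ)^(k+2)‖
        = r^(j+i) / (1+r^2)^(k+2) := by
      rw [norm_div, norm_mul, norm_pow, norm_pow, norm_pow]
      rw [Complex.norm_conj]
      rw [Complex.norm_real, Real.norm_eq_abs, _root_.abs_of_nonneg h1.le]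
      rw [← hr]; ring
    rw [hnorm]
    have hw : ‖w‖ = r := by rw [hr]
    have hexp : ((1:ℝ) + r^2) ^ (-(4:ℝ)/2) = ((1+r^2)^2)⁻¹ := by
      rw [show (-(4:ℝ)/2) = -(2:ℝ) by norm_num, Real.rpow_neg h1.le,
        show ((2:ℝ)) = ((2:ℕ):ℝ) by norm_num, Real.rpow_natCast]
    rw [hexp, div_le_iff₀ (by positivity), mul_assoc,
      show ((1+r^2)^2)⁻¹ * (1+r^2)^(k+2) = (1+r^2)^k by field_simp; ring]
    calc r^(j+i) ≤ (1+r)^(j+i) := pow_le_pow_left₀ hr0 (by linarith) _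
      _ ≤ (1+r)^(2*k) := pow_le_pow_right₀ (by linarith) (by omega)
      _ = ((1+r)^2)^k := by rw [← pow_mul, mul_comm]
      _ ≤ (2*(1+r^2))^k := pow_le_pow_left₀ (by positivity) (by nlinarith [sq_nonneg (1-r)]) _
      _ = 2^k * (1+r^2)^k := mul_pow _ _ _

private lemma polar_pointwise (k i j : ℕ) (r θ : ℝ) (hr : 0 < r) :
    (r:ℂ) * ((starRingEnd ℂ (Complex.polarCoord.symm (r,θ)))^j
        * (Complex.polarCoord.symm (r,θ))^i
        / ((1 + ‖Complex.polarCoord.symm (r,θ)‖^2 : ℝ):ℂ)^(k+2))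
      = ((r^(i+j+1)/(1+r^2)^(k+2) : ℝ) : ℂ)
        * Complex.exp (((i:ℂ) - (j:ℂ)) * θ * Complex.I) := by
  have hsymm : Complex.polarCoord.symm (r,θ) = (r:ℂ) * Complex.exp (θ * Complex.I) := by
    rw [Complex.polarCoord_symm_apply]
    rw [Complex.exp_mul_I]
    push_cast [Complex.ofReal_cos, Complex.ofReal_sin]
    ring
  rw [hsymm]
  have habs : ‖(r:ℂ) * Complex.exp (θ * Complex.I)‖ = r := by
    rw [norm_mul, Complex.norm_real, Complex.norm_exp_ofReal_mul_I, Real.norm_eq_abs,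
      _root_.abs_of_pos hr, mul_one]
  rw [habs]
  have hconj : (starRingEnd ℂ) ((r:ℂ) * Complex.exp (θ * Complex.I))
      = (r:ℂ) * Complex.exp (-(θ * Complex.I)) := by
    rw [map_mul, Complex.conj_ofReal, ← Complex.exp_conj]
    congr 1
    simp [Complex.conj_I]
  rw [hconj]
  have hden : (((1 + r^2 : ℝ)):ℂ) ≠ 0 := by
    rw [Complex.ofReal_ne_zero]; positivity
  rw [mul_pow, mul_pow, ← Complex.exp_nat_mul, ← Complex.exp_nat_mul]
  have hexp2 : Complex.exp ((j:ℂ) * -(↑θ*Complex.I)) * Complex.exp ((i:ℂ) * (↑θ*Complex.I))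
      = Complex.exp (((i:ℂ) - (j:ℂ)) * ↑θ * Complex.I) := by
    rw [← Complex.exp_add]; congr 1; ring
  push_cast
  rw [← hexp2]
  ring

private lemma H_value (k i j : ℕ) (hi : i ≤ k) :
    ∫ w : ℂ, (starRingEnd ℂ w)^j * w^i / ((1 + ‖w‖^2 : ℝ):ℂ)^(k+2)
      = if j = i then ((Real.pi * i.factorial * (k-i).factorial / (k+1).factorial : ℝ) : ℂ)
        else 0 := by
  rw [← Complex.integral_comp_polarCoord_symm, polarCoord_target]
  have hcongr : ∫ p in Set.Ioi (0:ℝ) ×ˢ Set.Ioo (-π) π,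
        p.1 • ((starRingEnd ℂ (Complex.polarCoord.symm p))^j
          * (Complex.polarCoord.symm p)^i
          / ((1 + ‖Complex.polarCoord.symm p‖^2 : ℝ):ℂ)^(k+2))
      = ∫ p in Set.Ioi (0:ℝ) ×ˢ Set.Ioo (-π) π,
        ((fun r : ℝ => ((r^(i+j+1)/(1+r^2)^(k+2) : ℝ) : ℂ)) p.1)
          * ((fun θ : ℝ => Complex.exp (((i:ℂ) - (j:ℂ)) * θ * Complex.I)) p.2) := by
    apply setIntegral_congr_fun (measurableSet_Ioi.prod measurableSet_Ioo)
    intro p hp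
    have hr : 0 < p.1 := hp.1
    dsimp only
    rw [Complex.real_smul]
    exact polar_pointwise k i j p.1 p.2 hr
  rw [hcongr, Measure.volume_eq_prod]
  rw [setIntegral_prod_mul (μ := (volume : Measure ℝ)) (ν := (volume : Measure ℝ))
    (fun r : ℝ => ((r^(i+j+1)/(1+r^2)^(k+2) : ℝ) : ℂ))
    (fun θ : ℝ => Complex.exp (((i:ℂ) - (j:ℂ)) * θ * Complex.I))
    (Set.Ioi 0) (Set.Ioo (-π) π)]
  have hang : ∫ θ in Set.Ioo (-π) π, Complex.exp (((i:ℂ) - (j:ℂ)) * θ * Complex.I)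
      = if j = i then ((2*π : ℝ) : ℂ) else 0 := by
    have hc : ((i:ℂ) - (j:ℂ)) = (((i:ℤ) - (j:ℤ) : ℤ) : ℂ) := by push_cast; ring
    rw [hc, aux_angular ((i:ℤ) - (j:ℤ))]
    by_cases h : j = i
    · rw [if_pos (by omega), if_pos h]
    · rw [if_neg (by omega), if_neg h]
  rw [hang]
  rcases eq_or_ne j i with rfl | hij
  · simp only [if_pos rfl, eq_self_iff_true, if_true]
    have h1 : (∫ x in Set.Ioi (0:ℝ), ((x^(j+j+1)/(1+x^2)^(k+2) : ℝ) : ℂ))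
        = (((∫ x in Set.Ioi (0:ℝ), x^(j+j+1)/(1+x^2)^(k+2)) : ℝ) : ℂ) := integral_ofReal
    have h2 := aux_radial_value j k hi
    simp only [two_mul] at h2
    rw [h1, h2, ← Complex.ofReal_mul]
    have hfne : ((k+1).factorial : ℝ) ≠ 0 := by exact_mod_cast (k+1).factorial_ne_zero
    congr 1
    field_simp
    ring
  · simp [hij]

private lemma monomial_case (k i : ℕ) (hi : i ≤ k) (z : ℂ) :
    Integrable (fun w : ℂ =>
        (1 + z * starRingEnd ℂ w) ^ k / ((1 + ‖w‖ ^ 2 : ℝ) : ℂ) ^ (k + 2) * w^i) ∧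
      ((k : ℂ) + 1) / (Real.pi : ℂ) *
        ∫ w : ℂ, (1 + z * starRingEnd ℂ w) ^ k / ((1 + ‖w‖ ^ 2 : ℝ) : ℂ) ^ (k + 2) * w^i
      = z^i := by
  have hexpand : ∀ w : ℂ,
      (1 + z * starRingEnd ℂ w) ^ k / ((1 + ‖w‖ ^ 2 : ℝ) : ℂ) ^ (k + 2) * w^i
      = ∑ j ∈ Finset.range (k+1), ((k.choose j : ℂ) * z^j)
          * ((starRingEnd ℂ w)^j * w^i / ((1 + ‖w‖^2 : ℝ):ℂ)^(k+2)) := by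
    intro w
    have hb : (1 + z * starRingEnd ℂ w) ^ k
        = ∑ j ∈ Finset.range (k+1), (z * starRingEnd ℂ w)^j * (k.choose j : ℂ) := by
      rw [add_comm]
      rw [add_pow]
      exact Finset.sum_congr rfl fun j _ => by rw [one_pow, mul_one]
    rw [hb, Finset.sum_div, Finset.sum_mul]
    exact Finset.sum_congr rfl fun j _ => by rw [mul_pow]; ring
  have hint : ∀ j ∈ Finset.range (k+1), Integrable (fun w : ℂ => ((k.choose j : ℂ) * z^j)
      * ((starRingEnd ℂ w)^j * w^i / ((1 + ‖w‖^2 : ℝ):ℂ)^(k+2))) := by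
    intro j hj
    have hjk : j ≤ k := by have := Finset.mem_range.mp hj; omega
    exact (H_integrable k i j hi hjk).const_mul _
  constructor
  · rw [show (fun w : ℂ =>
      (1 + z * starRingEnd ℂ w) ^ k / ((1 + ‖w‖ ^ 2 : ℝ) : ℂ) ^ (k + 2) * w^i)
      = fun w => ∑ j ∈ Finset.range (k+1), ((k.choose j : ℂ) * z^j)
          * ((starRingEnd ℂ w)^j * w^i / ((1 + ‖w‖^2 : ℝ):ℂ)^(k+2))
      from funext hexpand]
    exact integrable_finset_sum _ hint
  · rw [show (∫ w : ℂ, (1 + z * starRingEnd ℂ w) ^ k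
        / ((1 + ‖w‖ ^ 2 : ℝ) : ℂ) ^ (k + 2) * w^i)
      = ∫ w : ℂ, ∑ j ∈ Finset.range (k+1), ((k.choose j : ℂ) * z^j)
          * ((starRingEnd ℂ w)^j * w^i / ((1 + ‖w‖^2 : ℝ):ℂ)^(k+2))
      from integral_congr_ae (Filter.Eventually.of_forall hexpand)]
    rw [integral_finset_sum _ hint]
    have hval : ∀ j ∈ Finset.range (k+1),
        (∫ w : ℂ, ((k.choose j : ℂ) * z^j)
          * ((starRingEnd ℂ w)^j * w^i / ((1 + ‖w‖^2 : ℝ):ℂ)^(k+2)))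
        = if j = i then ((k.choose j : ℂ) * z^j)
            * ((Real.pi * i.factorial * (k-i).factorial / (k+1).factorial : ℝ) : ℂ) else 0 := by
      intro j hj
      rw [integral_const_mul, H_value k i j hi]
      split_ifs with h
      · rfl
      · rw [mul_zero]
    rw [Finset.sum_congr rfl hval, Finset.sum_ite_eq' (Finset.range (k+1)) i,
      if_pos (Finset.mem_range.mpr (by omega))]
    have hfact : (k.choose i : ℂ) * i.factorial * (k-i).factorial = k.factorial := by
      exact_mod_cast congrArg (Nat.cast (R := ℂ)) (Nat.choose_mul_factorial_mul_factorial hi)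
    have hpi : ((Real.pi : ℝ) : ℂ) ≠ 0 := by
      rw [Complex.ofReal_ne_zero]; exact Real.pi_ne_zero
    have hkfac : ((k.factorial : ℕ) : ℂ) ≠ 0 := Nat.cast_ne_zero.mpr k.factorial_ne_zero
    have hk1 : ((k:ℂ) + 1) ≠ 0 := Nat.cast_add_one_ne_zero k
    have hfac1 : (((k+1).factorial : ℕ) : ℂ) = ((k:ℂ)+1) * ((k.factorial : ℕ) : ℂ) := by
      push_cast [Nat.factorial_succ]; ring
    push_cast
    rw [hfac1]
    field_simp
    linear_combination z^i * hfact


/-- Reproducing property of the Bergman kernel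
`Π_k(z,w) = ((k+1)/π) (1 + z conj(w))^k (1 + |w|²)^(-(k+2))` on the space of complex
polynomials of degree at most `k` (Section 8 of the paper). -/
theorem stmt_4 (k : ℕ) (P : Polynomial ℂ) (hP : P.natDegree ≤ k) (z : ℂ) :
    Integrable (fun w : ℂ =>
      (1 + z * starRingEnd ℂ w) ^ k / ((1 + ‖w‖ ^ 2 : ℝ) : ℂ) ^ (k + 2) *
        P.eval w) ∧
    ((k : ℂ) + 1) / (Real.pi : ℂ) *
        ∫ w : ℂ, (1 + z * starRingEnd ℂ w) ^ k /
            ((1 + ‖w‖ ^ 2 : ℝ) : ℂ) ^ (k + 2) * P.eval w =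
      P.eval z := by
  have hev : ∀ x : ℂ, P.eval x = ∑ n ∈ Finset.range (k+1), P.coeff n * x^n := fun x =>
    Polynomial.eval_eq_sum_range' (Nat.lt_succ_of_le hP) x
  have hexp : ∀ w : ℂ,
      (1 + z * starRingEnd ℂ w) ^ k / ((1 + ‖w‖ ^ 2 : ℝ) : ℂ) ^ (k + 2) * P.eval w
      = ∑ n ∈ Finset.range (k+1), P.coeff n *
          ((1 + z * starRingEnd ℂ w) ^ k / ((1 + ‖w‖ ^ 2 : ℝ) : ℂ) ^ (k + 2) * w^n) := by
    intro w
    rw [hev w, Finset.mul_sum]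
    exact Finset.sum_congr rfl fun n _ => by ring
  have hint : ∀ n ∈ Finset.range (k+1), Integrable (fun w : ℂ => P.coeff n *
      ((1 + z * starRingEnd ℂ w) ^ k / ((1 + ‖w‖ ^ 2 : ℝ) : ℂ) ^ (k + 2) * w^n)) := by
    intro n hn
    have hnk : n ≤ k := by have := Finset.mem_range.mp hn; omega
    exact (monomial_case k n hnk z).1.const_mul _
  constructor
  · rw [show (fun w : ℂ =>
        (1 + z * starRingEnd ℂ w) ^ k / ((1 + ‖w‖ ^ 2 : ℝ) : ℂ) ^ (k + 2) * P.eval w)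
      = fun w => ∑ n ∈ Finset.range (k+1), P.coeff n *
          ((1 + z * starRingEnd ℂ w) ^ k / ((1 + ‖w‖ ^ 2 : ℝ) : ℂ) ^ (k + 2) * w^n)
      from funext hexp]
    exact integrable_finset_sum _ hint
  · rw [show (∫ w : ℂ, (1 + z * starRingEnd ℂ w) ^ k /
            ((1 + ‖w‖ ^ 2 : ℝ) : ℂ) ^ (k + 2) * P.eval w)
      = ∫ w : ℂ, ∑ n ∈ Finset.range (k+1), P.coeff n *
          ((1 + z * starRingEnd ℂ w) ^ k / ((1 + ‖w‖ ^ 2 : ℝ) : ℂ) ^ (k + 2) * w^n)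
      from integral_congr_ae (Filter.Eventually.of_forall hexp)]
    rw [integral_finset_sum _ hint, Finset.mul_sum, hev z]
    refine Finset.sum_congr rfl fun n hn => ?_
    have hnk : n ≤ k := by have := Finset.mem_range.mp hn; omega
    rw [integral_const_mul, mul_left_comm, (monomial_case k n hnk z).2]
end

section
/- Let k ≥ 1 be a natural number, let ℓ be a natural number with ℓ ≤ k, and let z ∈ ℂ. Then ((k+1)/π) · ∫_ℂ (1 + z·conj(w))^(k−1) · (z·conj(w) − 1) / (1 + |w|²)^(k+2) · w^ℓ dA(w) = ((2ℓ − k)/k) · z^ℓ. -/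
open MeasureTheory Complex
open Set

lemma rad_integrable (n c : ℕ) (h : n + 2 ≤ c) :
    IntegrableOn (fun t : ℝ => t ^ n / (1 + t) ^ c) (Ioi 0) := by
  have hmeas : AEStronglyMeasurable (fun t : ℝ => t ^ n / (1 + t) ^ c)
      (volume.restrict (Ioi (0:ℝ))) := by
    apply Measurable.aestronglyMeasurable
    exact (measurable_id.pow_const n).div ((measurable_const.add measurable_id).pow_const c)
  have hint : Integrable (fun t : ℝ => (1 + ‖t‖) ^ (-(2:ℝ))) (volume.restrict (Ioi (0:ℝ))) := by
    refine (integrable_one_add_norm (E := ℝ) ?_).restrict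
    norm_num
  refine hint.mono' hmeas ?_
  filter_upwards [ae_restrict_mem measurableSet_Ioi] with t ht
  have ht0 : (0:ℝ) < t := ht
  have h1 : (0:ℝ) < 1 + t := by linarith
  have hnorm : ‖t‖ = t := by rw [Real.norm_eq_abs, abs_of_pos ht0]
  rw [Real.norm_eq_abs, hnorm, abs_div, abs_of_pos (by positivity), abs_of_pos (by positivity),
    Real.rpow_neg (by positivity : (0:ℝ) ≤ 1 + t)]
  have h2 : (1 + t) ^ ((2:ℝ)) = (1+t)^(2:ℕ) := by
    rw [← Real.rpow_natCast]; norm_num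
  rw [h2, div_le_iff₀ (by positivity), inv_mul_eq_div, le_div_iff₀ (by positivity)]
  calc t ^ n * (1+t)^(2:ℕ) ≤ (1+t)^n * (1+t)^(2:ℕ) := by gcongr; linarith
    _ = (1+t)^(n+2) := (pow_add _ _ _).symm
    _ ≤ (1+t)^c := pow_le_pow_right₀ (by linarith) h

lemma rad_base (m : ℕ) :
    ∫ t in Ioi (0:ℝ), (1:ℝ) / (1 + t) ^ (2 + m) = 1 / (m + 1) := by
  have key := integral_Ioi_of_hasDerivAt_of_tendsto
    (f := fun t : ℝ => -(1 / (m+1)) * ((1 + t) ^ (m+1))⁻¹)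
    (f' := fun t : ℝ => 1 / (1 + t) ^ (2 + m)) (a := 0) (m := 0)
    ?_ ?_ ?_ ?_
  · rw [key]; norm_num
  · apply ContinuousAt.continuousWithinAt
    exact (((continuous_const.add continuous_id).pow (m+1)).continuousAt.inv₀
      (by norm_num)).const_mul _
  · intro x hx
    have hx0 : (0:ℝ) < x := hx
    have h1 : (0:ℝ) < 1 + x := by linarith
    have hd : HasDerivAt (fun t : ℝ => (1 + t) ^ (m+1))
        ((m+1 : ℕ) * (1 + x) ^ m * 1) x :=
      ((hasDerivAt_id x).const_add 1).pow (m+1)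
    have hd2 := (hd.inv (by positivity)).const_mul (-(1 / (m+1) : ℝ))
    convert hd2 using 1
    case e'_9 =>
      field_simp
      push_cast
      ring
    all_goals rfl
  · exact rad_integrable 0 (2+m) (by omega) |>.congr_fun (by
      intro t ht; simp) measurableSet_Ioi
  · have h1 : Filter.Tendsto (fun t : ℝ => (1 + t) ^ (m+1)) Filter.atTop Filter.atTop :=
      (Filter.tendsto_pow_atTop (Nat.succ_ne_zero m)).comp
        (Filter.tendsto_atTop_add_const_left _ 1 Filter.tendsto_id)
    have := h1.inv_tendsto_atTop
    simpa using (this.const_mul (-(1 / (m+1) : ℝ)))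

lemma rad_eq (n : ℕ) : ∀ m : ℕ, ∫ t in Ioi (0:ℝ), t ^ n / (1 + t) ^ (n + 2 + m) =
    (n.factorial * m.factorial : ℝ) / ((n + 1 + m).factorial) := by
  induction n with
  | zero =>
    intro m
    have := rad_base m
    simp only [pow_zero]
    rw [show 0 + 2 + m = 2 + m by ring, this,
      show 0 + 1 + m = m + 1 by ring, Nat.factorial_succ, Nat.factorial_zero]
    have hm : (m.factorial : ℝ) ≠ 0 := Nat.cast_ne_zero.2 m.factorial_ne_zero
    push_cast
    field_simp
  | succ n ih =>
    intro m
    have h1 : ∫ t in Ioi (0:ℝ), t ^ (n+1) / (1 + t) ^ (n + 1 + 2 + m) =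
        ∫ t in Ioi (0:ℝ), (t ^ n / (1 + t) ^ (n + 2 + m) - t ^ n / (1 + t) ^ (n + 2 + (m+1))) := by
      refine setIntegral_congr_fun measurableSet_Ioi (fun t ht => ?_)
      have ht0 : (0:ℝ) < t := ht
      have h1t : (0:ℝ) < 1 + t := by linarith
      have e1 : n + 1 + 2 + m = n + 2 + (m+1) := by ring
      have e2 : (1+t) ^ (n + 2 + (m+1)) = (1+t) ^ (n+2+m) * (1+t) := by
        rw [show n + 2 + (m+1) = (n+2+m) + 1 by ring, pow_succ]
      rw [e1, e2]
      field_simp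
      ring
    rw [h1, integral_sub (rad_integrable n _ (by omega)) (rad_integrable n _ (by omega)),
      ih m, ih (m+1)]
    have hne : ∀ j : ℕ, (j.factorial : ℝ) ≠ 0 := fun j => Nat.cast_ne_zero.2 j.factorial_ne_zero
    rw [show n + 1 + 1 + m = (n + 1 + m) + 1 by ring, Nat.factorial_succ (n+1+m),
      Nat.factorial_succ n, Nat.factorial_succ m,
      show n + 1 + (m+1) = (n + 1 + m) + 1 by ring, Nat.factorial_succ (n+1+m)]
    push_cast
    field_simp
    ring

lemma offdiag (a b c : ℕ) (hab : a ≠ b) :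
    ∫ w : ℂ, (starRingEnd ℂ w) ^ a * w ^ b / ((1 + ‖w‖ ^ 2 : ℝ) : ℂ) ^ c = 0 := by
  set d : ℝ := (b : ℝ) - (a : ℝ) with hd
  have hd0 : d ≠ 0 := sub_ne_zero.2 fun h => hab (Nat.cast_injective h.symm)
  set u : Circle := Circle.exp (Real.pi / d) with hu
  set F : ℂ → ℂ := fun w => (starRingEnd ℂ w) ^ a * w ^ b / ((1 + ‖w‖ ^ 2 : ℝ) : ℂ) ^ c
    with hF
  have hmp : MeasurePreserving (rotation u) volume volume := (rotation u).measurePreserving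
  have hme : MeasurableEmbedding (rotation u) := (rotation u).toHomeomorph.measurableEmbedding
  have hconj : starRingEnd ℂ (u:ℂ) = Complex.exp (-(((Real.pi/d : ℝ) : ℂ) * Complex.I)) := by
    rw [Circle.coe_exp, ← Complex.exp_conj, map_mul, Complex.conj_I, Complex.conj_ofReal]
    ring_nf
  have hcoef : (starRingEnd ℂ (u:ℂ)) ^ a * (u:ℂ) ^ b = -1 := by
    rw [hconj, Circle.coe_exp, ← Complex.exp_nat_mul, ← Complex.exp_nat_mul, ← Complex.exp_add]
    rw [show (a : ℂ) * -(((Real.pi/d : ℝ) : ℂ) * Complex.I) + (b:ℂ) * (((Real.pi/d : ℝ):ℂ) * Complex.I)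
        = (((b:ℂ) - (a:ℂ)) * ((Real.pi/d : ℝ):ℂ)) * Complex.I by ring]
    have : ((b:ℂ) - (a:ℂ)) * ((Real.pi/d : ℝ):ℂ) = (Real.pi : ℂ) := by
      have hbd : ((b:ℂ) - (a:ℂ)) = ((d : ℝ) : ℂ) := by rw [hd]; push_cast; ring
      rw [hbd]
      push_cast
      rw [mul_comm]
      exact div_mul_cancel₀ _ (Complex.ofReal_ne_zero.2 hd0)
    rw [this, Complex.exp_pi_mul_I]
  have hcomp := hmp.integral_comp hme F
  have hstep : ∀ w : ℂ, F ((rotation u) w) = -F w := by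
    intro w
    rw [rotation_apply, hF]
    simp only [map_mul, mul_pow, norm_mul, Circle.norm_coe, one_pow, one_mul]
    rw [show (starRingEnd ℂ (u:ℂ)) ^ a * (starRingEnd ℂ w) ^ a * ((u:ℂ) ^ b * w ^ b) =
        ((starRingEnd ℂ (u:ℂ)) ^ a * (u:ℂ) ^ b) * ((starRingEnd ℂ w) ^ a * w ^ b) from by ring,
      hcoef]
    ring
  have h2 : ∫ w : ℂ, F w = -∫ w : ℂ, F w := by
    conv_lhs => rw [← hcomp]
    simp_rw [hstep]
    exact integral_neg F
  linear_combination h2 / 2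

lemma diag (a m : ℕ) :
    ∫ w : ℂ, (starRingEnd ℂ w) ^ a * w ^ a / ((1 + ‖w‖ ^ 2 : ℝ) : ℂ) ^ (a + 2 + m) =
    ((Real.pi * (a.factorial * m.factorial) / ((a + 1 + m).factorial) : ℝ) : ℂ) := by
  set c := a + 2 + m with hc
  set g : ℝ → ℂ := fun y => (((y^2)^a / (1 + y^2)^c : ℝ) : ℂ) with hg
  have hpt : ∀ w : ℂ, (starRingEnd ℂ w) ^ a * w ^ a / ((1 + ‖w‖ ^ 2 : ℝ) : ℂ) ^ c
      = g ‖w‖ := by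
    intro w
    rw [hg]
    push_cast
    rw [← mul_pow, mul_comm, Complex.mul_conj']
  rw [show (fun w : ℂ => (starRingEnd ℂ w) ^ a * w ^ a /
      ((1 + ‖w‖ ^ 2 : ℝ) : ℂ) ^ c) = fun w => g ‖w‖ from funext hpt]
  rw [integral_fun_norm_addHaar (volume : Measure ℂ) g, Complex.finrank_real_complex,
    measureReal_def, Complex.volume_ball]
  have hb : ((ENNReal.ofReal (1:ℝ)) ^ 2 * (NNReal.pi : ENNReal)).toReal = Real.pi := by
    simp [ENNReal.toReal_mul]
  rw [hb]
  have hinner : ∀ y : ℝ, y ^ (2-1) • g y = ((y * ((y^2)^a / (1 + y^2)^c) : ℝ) : ℂ) := by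
    intro y
    rw [hg, pow_one, Complex.real_smul, Complex.ofReal_mul]
  simp_rw [hinner]
  rw [show (∫ y in Ioi (0:ℝ), ((y * ((y^2)^a / (1 + y^2)^c) : ℝ) : ℂ))
      = (((∫ y in Ioi (0:ℝ), y * ((y^2)^a / (1 + y^2)^c)) : ℝ) : ℂ) from integral_ofReal]
  have hsub : (∫ y in Ioi (0:ℝ), y * ((y^2)^a / (1 + y^2)^c))
      = (1/2) * ∫ t in Ioi (0:ℝ), t ^ a / (1+t) ^ c := by
    rw [← integral_comp_rpow_Ioi (fun t : ℝ => t ^ a / (1+t) ^ c) (two_ne_zero)]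
    have key : ∀ x : ℝ, (|(2:ℝ)| * x ^ ((2:ℝ) - 1)) • ((x ^ (2:ℝ)) ^ a / (1 + x ^ (2:ℝ)) ^ c)
        = 2 * (x * ((x^2)^a / (1 + x^2)^c)) := by
      intro x
      have h2 : x ^ ((2:ℝ)) = x ^ (2:ℕ) := by
        rw [← Real.rpow_natCast]; norm_num
      rw [show (2:ℝ) - 1 = 1 by norm_num, Real.rpow_one, h2, smul_eq_mul]
      rw [abs_of_pos (by norm_num : (0:ℝ) < 2)]
      ring
    simp_rw [key]
    rw [MeasureTheory.integral_const_mul]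
    ring
  rw [hsub, rad_eq a m]
  rw [nsmul_eq_mul, Complex.real_smul]
  push_cast
  ring

lemma mom_integrable (a b c : ℕ) (h : a + b + 3 ≤ 2*c) :
    Integrable (fun w : ℂ => (starRingEnd ℂ w) ^ a * w ^ b /
      ((1 + ‖w‖ ^ 2 : ℝ) : ℂ) ^ c) := by
  have hmeas : AEStronglyMeasurable (fun w : ℂ => (starRingEnd ℂ w) ^ a * w ^ b /
      ((1 + ‖w‖ ^ 2 : ℝ) : ℂ) ^ c) volume := by
    refine Continuous.aestronglyMeasurable ?_
    refine Continuous.div ?_ ?_ ?_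
    · exact (Complex.continuous_conj.pow a).mul (continuous_id.pow b)
    · exact (Complex.continuous_ofReal.comp
        (continuous_const.add (continuous_norm.pow 2))).pow c
    · intro w
      apply pow_ne_zero
      rw [Ne, Complex.ofReal_eq_zero]
      positivity
  have hint : Integrable (fun w : ℂ => (2:ℝ)^c * (1 + ‖w‖) ^ (-(3:ℝ))) volume := by
    refine (integrable_one_add_norm (E := ℂ) ?_).const_mul _
    rw [Complex.finrank_real_complex]; norm_num
  refine hint.mono' hmeas ?_
  filter_upwards with w
  set r := ‖w‖ with hr
  have hr0 : 0 ≤ r := norm_nonneg w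
  have h1 : (0:ℝ) < 1 + r := by linarith
  have h2 : (0:ℝ) < 1 + r^2 := by positivity
  have hnorm : ‖(starRingEnd ℂ w) ^ a * w ^ b / ((1 + ‖w‖ ^ 2 : ℝ) : ℂ) ^ c‖
      = r ^ (a+b) / (1 + r^2) ^ c := by
    rw [norm_div, norm_mul, norm_pow, norm_pow, norm_pow, RCLike.norm_conj,
      Complex.norm_real, Real.norm_eq_abs, abs_of_pos (by positivity), ← hr,
      pow_add]
  have hrpow : (1 + r) ^ (-(3:ℝ)) = ((1+r)^(3:ℕ))⁻¹ := by
    rw [Real.rpow_neg h1.le, ← Real.rpow_natCast (1+r) 3]; norm_num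
  rw [hnorm, hrpow]
  have key : r ^ (a+b) * (1+r)^(3:ℕ) ≤ 2^c * (1 + r^2)^c := by
    calc r ^ (a+b) * (1+r)^(3:ℕ)
        ≤ (1+r) ^ (a+b) * (1+r)^(3:ℕ) := by gcongr; linarith
      _ = (1+r) ^ (a+b+3) := by ring
      _ ≤ (1+r) ^ (2*c) := pow_le_pow_right₀ (by linarith) h
      _ = ((1+r)^2)^c := by rw [← pow_mul]
      _ ≤ (2*(1+r^2))^c :=
          pow_le_pow_left₀ (by positivity) (by nlinarith [sq_nonneg (1-r)]) c
      _ = 2^c * (1 + r^2)^c := mul_pow _ _ _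
  rw [div_le_iff₀ (by positivity), mul_comm ((2:ℝ)^c) _, mul_assoc, inv_mul_eq_div,
    le_div_iff₀ (by positivity)]
  exact key

/-- `T_k^{cov}(x₃) e_ℓ = ((2ℓ-k)/k) e_ℓ` (Section 8 of the paper), written out
explicitly as an integral identity for the covariant Berezin–Toeplitz operator of the
height function `x₃` on `S² ≅ ℂP¹`. -/
theorem stmt_5 (k : ℕ) (hk : 1 ≤ k) (ℓ : ℕ) (hℓ : ℓ ≤ k) (z : ℂ) :
    ((k : ℂ) + 1) / (Real.pi : ℂ) *
        ∫ w : ℂ, (1 + z * starRingEnd ℂ w) ^ (k - 1) * (z * starRingEnd ℂ w - 1) /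
            ((1 + ‖w‖ ^ 2 : ℝ) : ℂ) ^ (k + 2) * w ^ ℓ =
      (2 * (ℓ : ℂ) - (k : ℂ)) / (k : ℂ) * z ^ ℓ := by
  have hπ : (Real.pi : ℂ) ≠ 0 := Complex.ofReal_ne_zero.2 Real.pi_ne_zero
  have hk0 : (k:ℂ) ≠ 0 := Nat.cast_ne_zero.2 (by omega)
  set M : ℕ → ℂ := fun a => ∫ w : ℂ, (starRingEnd ℂ w) ^ a * w ^ ℓ /
      ((1 + ‖w‖ ^ 2 : ℝ) : ℂ) ^ (k + 2) with hMdef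
  have hM0 : ∀ a : ℕ, a ≠ ℓ → M a = 0 := fun a ha => offdiag a ℓ (k+2) ha
  have hMℓ : M ℓ = ((Real.pi * (ℓ.factorial * (k-ℓ).factorial) / ((k+1).factorial) : ℝ) : ℂ) := by
    have h := diag ℓ (k - ℓ)
    rw [show ℓ + 2 + (k-ℓ) = k + 2 by omega, show ℓ + 1 + (k-ℓ) = k+1 by omega] at h
    exact h
  set f : ℕ → ℂ → ℂ := fun j w =>
      ((k-1).choose j : ℂ) * z^(j+1) * ((starRingEnd ℂ w) ^ (j+1) * w ^ ℓ /
        ((1 + ‖w‖ ^ 2 : ℝ) : ℂ) ^ (k + 2)) -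
      ((k-1).choose j : ℂ) * z^j * ((starRingEnd ℂ w) ^ j * w ^ ℓ /
        ((1 + ‖w‖ ^ 2 : ℝ) : ℂ) ^ (k + 2)) with hfdef
  have hexp : ∀ w : ℂ, (1 + z * starRingEnd ℂ w) ^ (k - 1) * (z * starRingEnd ℂ w - 1) /
      ((1 + ‖w‖ ^ 2 : ℝ) : ℂ) ^ (k + 2) * w ^ ℓ = ∑ j ∈ Finset.range k, f j w := by
    intro w
    rw [add_comm (1:ℂ) (z * starRingEnd ℂ w), add_pow, Nat.sub_add_cancel hk,
      Finset.sum_mul, Finset.sum_div, Finset.sum_mul]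
    refine Finset.sum_congr rfl fun j hj => ?_
    rw [hfdef]
    simp only [one_pow]
    ring
  have hint : ∀ j ∈ Finset.range k, Integrable (f j) := by
    intro j hj
    have hj' : j < k := Finset.mem_range.1 hj
    exact ((mom_integrable (j+1) ℓ (k+2) (by omega)).const_mul _).sub
      ((mom_integrable j ℓ (k+2) (by omega)).const_mul _)
  have hsplit : (∫ w : ℂ, (1 + z * starRingEnd ℂ w) ^ (k - 1) * (z * starRingEnd ℂ w - 1) /
      ((1 + ‖w‖ ^ 2 : ℝ) : ℂ) ^ (k + 2) * w ^ ℓ) =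
      ∑ j ∈ Finset.range k, (((k-1).choose j : ℂ) * z^(j+1) * M (j+1) -
        ((k-1).choose j : ℂ) * z^j * M j) := by
    rw [show (fun w : ℂ => (1 + z * starRingEnd ℂ w) ^ (k - 1) * (z * starRingEnd ℂ w - 1) /
        ((1 + ‖w‖ ^ 2 : ℝ) : ℂ) ^ (k + 2) * w ^ ℓ) = fun w => ∑ j ∈ Finset.range k, f j w
      from funext hexp]
    rw [integral_finset_sum _ hint]
    refine Finset.sum_congr rfl fun j hj => ?_
    have hj' : j < k := Finset.mem_range.1 hj
    rw [hfdef]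
    rw [integral_sub ((mom_integrable (j+1) ℓ (k+2) (by omega)).const_mul _)
      ((mom_integrable j ℓ (k+2) (by omega)).const_mul _)]
    rw [MeasureTheory.integral_const_mul, MeasureTheory.integral_const_mul, hMdef]
  rw [hsplit, Finset.sum_sub_distrib]
  have hS2 : (∑ j ∈ Finset.range k, ((k-1).choose j : ℂ) * z^j * M j) =
      ((k-1).choose ℓ : ℂ) * z^ℓ * M ℓ := by
    refine Finset.sum_eq_single ℓ (fun b _ hb => by rw [hM0 b hb, mul_zero]) (fun hno => ?_)
    have : ℓ = k := by
      have := Finset.mem_range.not.1 hno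
      omega
    rw [this, Nat.choose_eq_zero_of_lt (by omega)]
    simp
  rw [hS2]
  rcases ℓ with _ | s
  · -- ℓ = 0
    have hS1 : (∑ j ∈ Finset.range k, ((k-1).choose j : ℂ) * z^(j+1) * M (j+1)) = 0 :=
      Finset.sum_eq_zero fun j _ => by rw [hM0 (j+1) (Nat.succ_ne_zero j), mul_zero]
    rw [hS1, hMℓ]
    simp only [Nat.choose_zero_right, Nat.cast_one, one_mul, pow_zero, mul_one,
      Nat.sub_zero, Nat.factorial_zero, Nat.cast_zero]
    have hkf : ((k.factorial : ℂ)) ≠ 0 := Nat.cast_ne_zero.2 k.factorial_ne_zero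
    have hk1 : ((k:ℂ)+1) ≠ 0 := Nat.cast_add_one_ne_zero k
    have hfac : (((k+1).factorial : ℕ) : ℂ) = ((k:ℂ)+1) * (k.factorial : ℂ) := by
      exact_mod_cast Nat.factorial_succ k
    push_cast
    rw [hfac]
    field_simp
    ring
  · -- ℓ = s + 1
    have hS1 : (∑ j ∈ Finset.range k, ((k-1).choose j : ℂ) * z^(j+1) * M (j+1)) =
        ((k-1).choose s : ℂ) * z^(s+1) * M (s+1) := by
      refine Finset.sum_eq_single s (fun b _ hb => by
        rw [hM0 (b+1) (by omega), mul_zero]) (fun hno => ?_)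
      exact absurd (Finset.mem_range.2 (by omega)) hno
    rw [hS1, hMℓ]
    -- ℕ factorial identities
    have hA : (k-1).choose s * (s+1).factorial * (k-(s+1)).factorial
        = (s+1) * (k-1).factorial := by
      have h0 := Nat.choose_mul_factorial_mul_factorial (show s ≤ k-1 by omega)
      rw [show k-1-s = k-(s+1) by omega] at h0
      rw [Nat.factorial_succ, ← h0]
      ring
    have hB : (k-1).choose (s+1) * (s+1).factorial * (k-(s+1)).factorial
        = (k-(s+1)) * (k-1).factorial := by
      by_cases hcase : s+1 ≤ k-1
      · have h0 := Nat.choose_mul_factorial_mul_factorial hcase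
        rw [show k-(s+1) = (k-1-(s+1))+1 by omega, Nat.factorial_succ (k-1-(s+1)), ← h0]
        ring
      · have : s + 1 = k := by omega
        rw [this, Nat.choose_eq_zero_of_lt (by omega), Nat.sub_self]
        simp
    have hkfac : k.factorial = k * (k-1).factorial := by
      conv_lhs => rw [show k = k-1+1 by omega]
      rw [Nat.factorial_succ, show k-1+1 = k by omega]
    have hC : (k+1).factorial = (k+1) * k * (k-1).factorial := by
      rw [Nat.factorial_succ, hkfac]; ring
    -- cast to ℂ
    have hAc : ((k-1).choose s : ℂ) * ((s+1).factorial : ℂ) * ((k-(s+1)).factorial : ℂ)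
        = ((s+1 : ℕ) : ℂ) * ((k-1).factorial : ℂ) := by exact_mod_cast congrArg (Nat.cast (R := ℂ)) hA
    have hBc : ((k-1).choose (s+1) : ℂ) * ((s+1).factorial : ℂ) * ((k-(s+1)).factorial : ℂ)
        = ((k-(s+1) : ℕ) : ℂ) * ((k-1).factorial : ℂ) := by exact_mod_cast congrArg (Nat.cast (R := ℂ)) hB
    have hCc : (((k+1).factorial : ℕ) : ℂ) = ((k:ℂ)+1) * (k:ℂ) * ((k-1).factorial : ℂ) := by
      exact_mod_cast congrArg (Nat.cast (R := ℂ)) hC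
    have hsub : ((k-(s+1) : ℕ) : ℂ) = (k:ℂ) - ((s:ℂ)+1) := by
      push_cast [Nat.cast_sub (show s+1 ≤ k from hℓ)]
      ring
    have hf1 : ((k-1).factorial : ℂ) ≠ 0 := Nat.cast_ne_zero.2 (Nat.factorial_ne_zero _)
    have hf2 : (((s+1).factorial : ℕ) : ℂ) ≠ 0 := Nat.cast_ne_zero.2 (Nat.factorial_ne_zero _)
    have hf3 : (((k-(s+1)).factorial : ℕ) : ℂ) ≠ 0 := Nat.cast_ne_zero.2 (Nat.factorial_ne_zero _)
    have hk1 : ((k:ℂ)+1) ≠ 0 := Nat.cast_add_one_ne_zero k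
    rw [hsub] at hBc
    push_cast at hAc hBc hCc ⊢
    rw [hCc]
    field_simp
    linear_combination z^(s+1) * (hAc - hBc)
end

section
/- Let k ≥ 0 and ε ≥ 0 be real numbers, let a ≤ b and δ > 0 be real numbers, let x₀ ∈ [a,b], and let u : ℝ² → ℂ be continuously differentiable on an open set containing the rectangle R = [a,b] × [−δ,δ]. Assume that on R one has ∂u/∂x + i·∂u/∂ξ = −i·k·ξ·u and |∂u/∂x (x,ξ)| ≤ ε. Then for every (x, ξ) ∈ R, |u(x, ξ) − u(x₀, 0)·exp(−k·ξ²/2)| ≤ ε·( |ξ| + |x − x₀|·exp(−k·ξ²/2) ). -/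
open Complex Set

/-- Quantitative double-Duhamel estimate at the core of Proposition 5.5 of the paper:
if `u` is `C¹` near the rectangle `R = [a,b] × [-δ,δ]`, satisfies the Bargmann-space
equation `∂u/∂x + i ∂u/∂ξ = -i k ξ u` on `R`, and `|∂u/∂x| ≤ ε` on `R`, then on `R`,
`|u(x,ξ) - u(x₀,0) e^{-kξ²/2}| ≤ ε (|ξ| + |x - x₀| e^{-kξ²/2})`. -/
theorem stmt_11 (k ε : ℝ) (hk : 0 ≤ k) (hε : 0 ≤ ε) (a b δ : ℝ) (hab : a ≤ b)
    (hδ : 0 < δ) (x₀ : ℝ) (hx₀ : x₀ ∈ Icc a b) (u : ℝ × ℝ → ℂ)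
    (V : Set (ℝ × ℝ)) (hV : IsOpen V) (hRV : Icc a b ×ˢ Icc (-δ) δ ⊆ V)
    (hu : ContDiffOn ℝ 1 u V)
    (heq : ∀ p ∈ Icc a b ×ˢ Icc (-δ) δ,
      fderiv ℝ u p (1, 0) + Complex.I * fderiv ℝ u p (0, 1) =
        -Complex.I * (k : ℂ) * (p.2 : ℂ) * u p)
    (hquasi : ∀ p ∈ Icc a b ×ˢ Icc (-δ) δ, ‖fderiv ℝ u p (1, 0)‖ ≤ ε) :
    ∀ p ∈ Icc a b ×ˢ Icc (-δ) δ,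
      ‖u p - u (x₀, 0) * ((Real.exp (-(k * p.2 ^ 2) / 2) : ℝ) : ℂ)‖ ≤
        ε * (|p.2| + |p.1 - x₀| * Real.exp (-(k * p.2 ^ 2) / 2)) := by
  have hdiff : ∀ q ∈ V, HasFDerivAt u (fderiv ℝ u q) q := fun q hq =>
    ((hu.differentiableOn one_ne_zero).differentiableAt (hV.mem_nhds hq)).hasFDerivAt
  have h0δ : (0:ℝ) ∈ Icc (-δ) δ := ⟨by linarith, by linarith⟩
  rintro ⟨x, ξ⟩ ⟨hx, hξ⟩
  simp only at hx hξ
  -- Step A : x-direction at ξ = 0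
  have hA : ‖u (x, 0) - u (x₀, 0)‖ ≤ ε * |x - x₀| := by
    have hderiv : ∀ t ∈ Icc a b,
        HasDerivWithinAt (fun t => u (t, 0)) (fderiv ℝ u (t, 0) (1, 0)) (Icc a b) t := by
      intro t ht
      have hmem : (t, (0:ℝ)) ∈ Icc a b ×ˢ Icc (-δ) δ := ⟨ht, h0δ⟩
      have h1 : HasDerivAt (fun t : ℝ => (t, (0:ℝ))) (1, 0) t :=
        HasDerivAt.prodMk (hasDerivAt_id t) (hasDerivAt_const t 0)
      exact ((hdiff _ (hRV hmem)).comp_hasDerivAt t h1).hasDerivWithinAt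
    have := Convex.norm_image_sub_le_of_norm_hasDerivWithin_le hderiv
      (fun t ht => by
        have : ‖fderiv ℝ u (t, 0) (1, 0)‖ ≤ ε := hquasi _ ⟨ht, h0δ⟩
        simpa using this)
      (convex_Icc a b) hx₀ hx
    simpa [Real.norm_eq_abs] using this
  -- Step B : ξ-direction at fixed x
  set E : ℝ → ℝ := fun t => Real.exp (k * t ^ 2 / 2) with hE
  set g : ℝ → ℂ := fun t => u (x, t) * (E t : ℂ) with hg
  have hEpos : ∀ t, 0 < E t := fun t => Real.exp_pos _
  have hsub : uIcc 0 ξ ⊆ Icc (-δ) δ := by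
    intro t ht
    rcases mem_uIcc.1 ht with ⟨h1, h2⟩ | ⟨h1, h2⟩ <;>
      exact ⟨by cases hξ; linarith, by cases hξ; linarith⟩
  have hB : ‖g ξ - g 0‖ ≤ ε * E ξ * |ξ| := by
    have hderiv : ∀ t ∈ uIcc 0 ξ,
        HasDerivWithinAt g (Complex.I * fderiv ℝ u (x, t) (1, 0) * (E t : ℂ))
          (uIcc 0 ξ) t := by
      intro t ht
      have hmem : (x, t) ∈ Icc a b ×ˢ Icc (-δ) δ := ⟨hx, hsub ht⟩
      have h1 : HasDerivAt (fun t : ℝ => (x, t)) ((0:ℝ), (1:ℝ)) t :=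
        HasDerivAt.prodMk (hasDerivAt_const t x) (hasDerivAt_id t)
      have h2 : HasDerivAt (fun t => u (x, t)) (fderiv ℝ u (x, t) (0, 1)) t :=
        (hdiff _ (hRV hmem)).comp_hasDerivAt t h1
      have h3 : HasDerivAt (fun t : ℝ => ((E t : ℝ) : ℂ)) ((k * t * E t : ℝ) : ℂ) t := by
        have : HasDerivAt E (k * t * E t) t := by
          have hq : HasDerivAt (fun t : ℝ => k * t ^ 2 / 2) (k * t) t := by
            have := ((hasDerivAt_pow 2 t).const_mul k).div_const 2
            refine this.congr_deriv ?_; push_cast; ring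
          simpa [hE, mul_comm] using hq.exp
        exact this.ofReal_comp
      have h4 := h2.mul h3
      have hEq := heq _ hmem
      have hD2 : fderiv ℝ u (x, t) (0, 1) =
          -(k : ℂ) * (t : ℂ) * u (x, t) + Complex.I * fderiv ℝ u (x, t) (1, 0) := by
        have : Complex.I * fderiv ℝ u (x, t) (0, 1) =
            -Complex.I * (k : ℂ) * (t : ℂ) * u (x, t) - fderiv ℝ u (x, t) (1, 0) := by
          linear_combination hEq
        have h5 := congrArg (fun z => -Complex.I * z) this
        rw [show -Complex.I * (Complex.I * (fderiv ℝ u (x, t)) (0, 1)) =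
            fderiv ℝ u (x, t) (0, 1) by
          rw [← mul_assoc]; simp [Complex.I_mul_I]] at h5
        rw [h5]; ring_nf; rw [Complex.I_sq]; ring
      have : (fderiv ℝ u (x, t)) (0, 1) * (E t : ℂ) + u (x, t) * ((k * t * E t : ℝ) : ℂ) =
          Complex.I * fderiv ℝ u (x, t) (1, 0) * (E t : ℂ) := by
        rw [hD2]; push_cast; ring
      rw [hg]
      exact (this ▸ h4).hasDerivWithinAt
    have hbound : ∀ t ∈ uIcc 0 ξ,
        ‖Complex.I * fderiv ℝ u (x, t) (1, 0) * (E t : ℂ)‖ ≤ ε * E ξ := by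
      intro t ht
      have hmem : (x, t) ∈ Icc a b ×ˢ Icc (-δ) δ := ⟨hx, hsub ht⟩
      have h1 : ‖fderiv ℝ u (x, t) (1, 0)‖ ≤ ε := hquasi _ hmem
      have ht2 : t ^ 2 ≤ ξ ^ 2 := by
        rcases mem_uIcc.1 ht with ⟨h1, h2⟩ | ⟨h1, h2⟩ <;> nlinarith
      have hEE : E t ≤ E ξ := Real.exp_le_exp.2 (by nlinarith)
      calc ‖Complex.I * fderiv ℝ u (x, t) (1, 0) * (E t : ℂ)‖
          = ‖fderiv ℝ u (x, t) (1, 0)‖ * E t := by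
            simp [abs_of_pos (hEpos t)]
        _ ≤ ε * E ξ := mul_le_mul h1 hEE (hEpos t).le hε
    have := Convex.norm_image_sub_le_of_norm_hasDerivWithin_le hderiv hbound
      (convex_uIcc 0 ξ) left_mem_uIcc right_mem_uIcc
    simpa [Real.norm_eq_abs] using this
  -- combine
  have hEinv : Real.exp (-(k * ξ ^ 2) / 2) = (E ξ)⁻¹ := by
    rw [hE, ← Real.exp_neg]; ring_nf
  have hne : ((E ξ : ℝ) : ℂ) ≠ 0 := Complex.ofReal_ne_zero.2 (hEpos ξ).ne'
  have hgξ : u (x, ξ) = g ξ * ((E ξ)⁻¹ : ℝ) := by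
    rw [hg]; push_cast; field_simp
  have hg0 : g 0 = u (x, 0) := by simp [hg, hE]
  have key : u (x, ξ) - u (x₀, 0) * (Real.exp (-(k * ξ ^ 2) / 2) : ℂ) =
      (g ξ - g 0) * ((E ξ)⁻¹ : ℝ) + (u (x, 0) - u (x₀, 0)) * ((E ξ)⁻¹ : ℝ) := by
    rw [hgξ, hg0, hEinv]; push_cast; ring
  calc ‖u (x, ξ) - u (x₀, 0) * ((Real.exp (-(k * ξ ^ 2) / 2) : ℝ) : ℂ)‖
      ≤ ‖(g ξ - g 0) * (((E ξ)⁻¹ : ℝ) : ℂ)‖ + ‖(u (x, 0) - u (x₀, 0)) * (((E ξ)⁻¹ : ℝ) : ℂ)‖ := by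
        rw [key]; exact norm_add_le _ _
    _ ≤ (ε * E ξ * |ξ|) * (E ξ)⁻¹ + (ε * |x - x₀|) * (E ξ)⁻¹ := by
        have hinv : (0:ℝ) ≤ (E ξ)⁻¹ := (inv_pos.2 (hEpos ξ)).le
        have t1 : ‖(g ξ - g 0) * (((E ξ)⁻¹ : ℝ) : ℂ)‖ ≤ (ε * E ξ * |ξ|) * (E ξ)⁻¹ := by
          rw [norm_mul, Complex.norm_real, Real.norm_eq_abs,
            _root_.abs_of_nonneg hinv]
          exact mul_le_mul_of_nonneg_right hB hinv
        have t2 : ‖(u (x, 0) - u (x₀, 0)) * (((E ξ)⁻¹ : ℝ) : ℂ)‖ ≤ (ε * |x - x₀|) * (E ξ)⁻¹ := by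
          rw [norm_mul, Complex.norm_real, Real.norm_eq_abs,
            _root_.abs_of_nonneg hinv]
          exact mul_le_mul_of_nonneg_right hA hinv
        exact add_le_add t1 t2
    _ = ε * (|ξ| + |x - x₀| * Real.exp (-(k * ξ ^ 2) / 2)) := by
        rw [hEinv]; have := (hEpos ξ).ne'; field_simp
  done
end

section
/- Let V be a real vector space and let J : V → V be a linear map with J ∘ J = −id. Let F be a linear subspace of V with F ∩ J(F) = {0}. Define the subspace G = { (v + J w, v − J w) : v, w ∈ F } of V × V and the linear map J̃ : V × V → V × V, (a, b) ↦ (J a, J b). Then G ∩ J̃(G) = {(0,0)}. -/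
/-- Linear-algebra core of Proposition 3.7 of the paper: if `(V, J)` is a vector space
with a complex structure (`J ∘ J = -id`) and `F` is a totally real subspace
(`F ∩ J(F) = {0}`), then `G = {(v + Jw, v - Jw) : v, w ∈ F}` is totally real in
`V × V` for the complex structure `J̃ = (J, J)`. -/
theorem stmt_13 {V : Type*} [AddCommGroup V] [Module ℝ V] (J : V →ₗ[ℝ] V)
    (hJ : ∀ v : V, J (J v) = -v) (F : Submodule ℝ V)
    (hF : (F : Set V) ∩ (J '' (F : Set V)) = {0}) :
    {p : V × V | ∃ v ∈ F, ∃ w ∈ F, p = (v + J w, v - J w)} ∩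
        ((fun p : V × V => (J p.1, J p.2)) ''
          {p : V × V | ∃ v ∈ F, ∃ w ∈ F, p = (v + J w, v - J w)}) =
      {((0 : V), (0 : V))} := by
  have key : ∀ x : V, x ∈ F → x ∈ J '' (F : Set V) → x = 0 := by
    intro x hx hx'
    have : x ∈ (F : Set V) ∩ (J '' (F : Set V)) := ⟨hx, hx'⟩
    rw [hF] at this; exact this
  ext p
  constructor
  · rintro ⟨⟨v, hv, w, hw, rfl⟩, ⟨q, ⟨a, ha, b, hb, rfl⟩, heq⟩⟩
    simp only [Prod.mk.injEq] at heq
    obtain ⟨h1, h2⟩ := heq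
    rw [map_add, hJ] at h1
    rw [map_sub, hJ] at h2
    -- h1 : J a + -b = v + J w,  h2 : J a - -b = v - J w
    have hveq : v = J a := by
      have h3 : v + v = J a + J a := by
        have h5 : (J a + -b) + (J a - -b) = (v + J w) + (v - J w) := by rw [h1, h2]
        abel_nf at h5 ⊢
        exact h5.symm
      have h4 : (2:ℝ) • v = (2:ℝ) • J a := by rw [two_smul, two_smul]; exact h3
      exact smul_right_injective V (by norm_num : (2:ℝ) ≠ 0) h4
    have hv0 : v = 0 := key v hv ⟨a, ha, hveq.symm⟩
    have ha0 : a = 0 := by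
      have hJa : J a = 0 := hveq ▸ hv0
      have := hJ a
      rw [hJa, map_zero] at this
      exact (neg_eq_zero.mp this.symm)
    have hJw : J w = -b := by
      have h3 : J w + J w = -b + -b := by
        have h5 : (J a - -b) - (J a + -b) = (v - J w) - (v + J w) := by rw [h1, h2]
        abel_nf at h5 ⊢
        rw [neg_smul] at h5 ⊢
        exact (neg_eq_iff_eq_neg.mpr h5).symm
      have h4 : (2:ℝ) • J w = (2:ℝ) • (-b) := by rw [two_smul, two_smul]; exact h3
      exact smul_right_injective V (by norm_num : (2:ℝ) ≠ 0) h4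
    have hJwF : J w ∈ F := hJw ▸ F.neg_mem hb
    have hJw0 : J w = 0 := key (J w) hJwF ⟨w, hw, rfl⟩
    have hw0 : w = 0 := by
      have := hJ w
      rw [hJw0, map_zero] at this
      exact (neg_eq_zero.mp this.symm)
    simp [hv0, hw0]
  · rintro rfl
    refine ⟨⟨0, F.zero_mem, 0, F.zero_mem, by simp⟩,
      ⟨(0, 0), ⟨0, F.zero_mem, 0, F.zero_mem, by simp⟩, by simp⟩⟩
end
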